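/- Let X : Ω → ℝⁿ be a random vector with mean μ ∈ ℝⁿ that is sub-Gaussian with matrix variance proxy Σ ≻ 0. Then for all τ > √n, Pr{ ‖X − μ‖_{Σ⁻¹} ≥ τ } ≤ (e/n)^{n/2} · τⁿ · exp(−τ²/2), where ‖x‖_{Σ⁻¹} := √(xᵀΣ⁻¹x). -/

import Mathlib

open MeasureTheory Matrix

noncomputable section

/-- A random vector `X` with mean `μ` is sub-Gaussian with matrix variance proxy `S`
(`X ~ SG(μ, S)`): its moment generating function exists and
`E[exp(λᵀ(X − μ))] ≤ exp(λᵀ S λ / 2)` for all `λ ∈ ℝⁿ`. -/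
def IsSubGaussianMat {Ω : Type*} [MeasurableSpace Ω] {n : ℕ} (P : Measure Ω)
    (X : Ω → Fin n → ℝ) (μ : Fin n → ℝ) (S : Matrix (Fin n) (Fin n) ℝ) : Prop :=
  ∀ l : Fin n → ℝ,
    Integrable (fun ω => Real.exp (l ⬝ᵥ (X ω - μ))) P ∧
    ∫ ω, Real.exp (l ⬝ᵥ (X ω - μ)) ∂P ≤ Real.exp ((l ⬝ᵥ (S *ᵥ l)) / 2)

section Helpers
open MeasureTheory Matrix Real
open scoped ENNReal NNReal

noncomputable def gphi (x : ℝ) : ℝ := (Real.sqrt (2*π))⁻¹ * Real.exp (-x^2/2)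

lemma gphi_pos (x : ℝ) : 0 < gphi x := by
  have : 0 < Real.sqrt (2*π) := Real.sqrt_pos.2 (by positivity)
  unfold gphi; positivity

lemma gphi_measurable : Measurable gphi := by
  unfold gphi; fun_prop

private lemma exp_combine (a b c : ℝ) : Real.exp a * (c * Real.exp b) = c * Real.exp (a+b) := by
  rw [Real.exp_add]; ring

lemma gauss_lin_eq (v x : ℝ) : Real.exp (v*x) * gphi x
    = (Real.exp (v^2/2) * (Real.sqrt (2*π))⁻¹) * Real.exp (-(1/2) * (x - v)^2) := by
  rw [gphi, exp_combine, mul_assoc, exp_combine]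
  congr 1
  ring

lemma gauss_lin_int (v : ℝ) :
    Integrable (fun x => Real.exp (v*x) * gphi x) := by
  simp only [gauss_lin_eq]
  exact (((integrable_exp_neg_mul_sq (by norm_num : (0:ℝ) < 1/2)).comp_sub_right v).const_mul _)

lemma gauss_lin (v : ℝ) :
    ∫ x, Real.exp (v*x) * gphi x = Real.exp (v^2/2) := by
  simp only [gauss_lin_eq]
  rw [MeasureTheory.integral_const_mul]
  have : ∫ x : ℝ, Real.exp (-(1/2) * (x - v)^2) = Real.sqrt (2*π) := by
    rw [show (fun x : ℝ => Real.exp (-(1/2) * (x - v)^2))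
        = fun x => (fun y => Real.exp (-(1/2) * y^2)) (x - v) from rfl]
    rw [integral_sub_right_eq_self (fun y => Real.exp (-(1/2) * y^2)) v, integral_gaussian]
    norm_num
    ring
  rw [this]
  have h : Real.sqrt (2*π) ≠ 0 := ne_of_gt (Real.sqrt_pos.2 (by positivity))
  field_simp

lemma gauss_sq_eq (c x : ℝ) : Real.exp (c*x^2/2) * gphi x
    = (Real.sqrt (2*π))⁻¹ * Real.exp (-((1-c)/2) * x^2) := by
  rw [gphi, exp_combine]
  congr 1
  ring

lemma gauss_sq_int {c : ℝ} (hc : c < 1) :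
    Integrable (fun x => Real.exp (c*x^2/2) * gphi x) := by
  simp only [gauss_sq_eq]
  exact (integrable_exp_neg_mul_sq (by linarith : (0:ℝ) < (1-c)/2)).const_mul _

lemma gauss_sq {c : ℝ} (hc : c < 1) :
    ∫ x, Real.exp (c*x^2/2) * gphi x = (Real.sqrt (1-c))⁻¹ := by
  simp only [gauss_sq_eq]
  rw [MeasureTheory.integral_const_mul, integral_gaussian]
  have h1 : (0:ℝ) < 1 - c := by linarith
  have h2 : (0:ℝ) < π := pi_pos
  have h3 : Real.sqrt (2*π) ≠ 0 := ne_of_gt (Real.sqrt_pos.2 (by positivity))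
  rw [show π / ((1-c)/2) = (2*π) / (1-c) by field_simp,
    Real.sqrt_div (by positivity) (1-c)]
  field_simp

lemma dot_aux {n : ℕ} (M : Matrix (Fin n) (Fin n) ℝ) (x y : Fin n → ℝ) :
    (M *ᵥ x) ⬝ᵥ y = x ⬝ᵥ (Mᵀ *ᵥ y) := by
  rw [Matrix.dotProduct_mulVec, Matrix.vecMul_transpose]

end Helpers

/-- elliptical tail bound. If `X ~ SG(μ, Σ)` with `Σ ≻ 0`, then for all
`τ > √n`, `Pr{‖X − μ‖_{Σ⁻¹} ≥ τ} ≤ (e/n)^{n/2} τⁿ exp(−τ²/2)`. -/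
theorem subGaussian_elliptical_tail {Ω : Type*} [MeasurableSpace Ω] {n : ℕ}
    (P : Measure Ω) [IsProbabilityMeasure P]
    (X : Ω → Fin n → ℝ) (hX : Measurable X) (μ : Fin n → ℝ)
    (Sig : Matrix (Fin n) (Fin n) ℝ) (hSig : Sig.PosDef)
    (hsg : IsSubGaussianMat P X μ Sig)
    (τ : ℝ) (hτ : Real.sqrt n < τ) :
    P {ω | τ ≤ Real.sqrt ((X ω - μ) ⬝ᵥ (Sig⁻¹ *ᵥ (X ω - μ)))} ≤
      ENNReal.ofReal
        ((Real.exp 1 / n) ^ ((n : ℝ) / 2) * τ ^ (n : ℕ) * Real.exp (-τ ^ 2 / 2)) := by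
  classical
  rcases Nat.eq_zero_or_pos n with hn0 | hn0
  · subst hn0
    have hτ0 : 0 < τ := by simpa using hτ
    have hset : {ω | τ ≤ Real.sqrt ((X ω - μ) ⬝ᵥ (Sig⁻¹ *ᵥ (X ω - μ)))} = ∅ := by
      ext ω
      have h0 : (X ω - μ) ⬝ᵥ (Sig⁻¹ *ᵥ (X ω - μ)) = 0 := by
        simp [dotProduct]
      simp [h0, not_le, hτ0]
    rw [hset, measure_empty]; exact zero_le
  have hτpos : 0 < τ := lt_of_le_of_lt (Real.sqrt_nonneg _) hτ
  have hτ2 : (n:ℝ) < τ^2 := (Real.sqrt_lt' hτpos).1 hτ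
  have hnpos : (0:ℝ) < n := by exact_mod_cast hn0
  have hτ2pos : (0:ℝ) < τ^2 := by positivity
  set lam : ℝ := 1 - n / τ^2 with hlamdef
  have hlam_pos : 0 < lam := by
    have : (n:ℝ)/τ^2 < 1 := (div_lt_one hτ2pos).2 hτ2
    exact sub_pos.2 this
  have hlam_lt : lam < 1 := by
    have : 0 < (n:ℝ)/τ^2 := by positivity
    rw [hlamdef]; linarith
  have h1lam : 1 - lam = (n:ℝ) / τ^2 := by rw [hlamdef]; ring
  set t : ℝ := Real.sqrt lam with htdef
  have ht2 : t * t = lam := Real.mul_self_sqrt hlam_pos.le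
  -- matrix facts
  have hinv : (Sig⁻¹).PosDef := hSig.inv
  have hps : (Sig⁻¹).PosSemidef := hinv.posSemidef
  open scoped MatrixOrder Matrix.Norms.L2Operator in
  set S : Matrix (Fin n) (Fin n) ℝ := CFC.sqrt (Sig⁻¹) with hSdef
  open scoped MatrixOrder Matrix.Norms.L2Operator in
  have hS2 : S * S = Sig⁻¹ := CFC.sqrt_mul_sqrt_self _ hps.nonneg
  open scoped MatrixOrder Matrix.Norms.L2Operator in
  have hSsym : Sᵀ = S := by
    have h := (CFC.sqrt_nonneg (Sig⁻¹)).isSelfAdjoint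
    rwa [IsSelfAdjoint, Matrix.star_eq_conjTranspose, Matrix.conjTranspose_eq_transpose_of_trivial] at h
  have hdet : IsUnit Sig.det := isUnit_iff_ne_zero.2 hSig.det_pos.ne'
  have hSigInv : Sig * Sig⁻¹ = 1 := Matrix.mul_nonsing_inv _ hdet
  have hInvSig : Sig⁻¹ * Sig = 1 := Matrix.nonsing_inv_mul _ hdet
  have hcommInv : S * Sig⁻¹ = Sig⁻¹ * S := by
    calc S * Sig⁻¹ = S * (S * S) := by rw [hS2]
    _ = (S * S) * S := by rw [mul_assoc]
    _ = Sig⁻¹ * S := by rw [hS2]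
  have hcomm : Sig * S = S * Sig := by
    calc Sig * S = Sig * S * (Sig⁻¹ * Sig) := by rw [hInvSig, mul_one]
    _ = (Sig * (S * Sig⁻¹)) * Sig := by simp only [mul_assoc]
    _ = (Sig * (Sig⁻¹ * S)) * Sig := by rw [hcommInv]
    _ = S * Sig := by rw [← mul_assoc, hSigInv, one_mul]
  have hSSigS : S * Sig * S = 1 := by
    rw [mul_assoc, hcomm, ← mul_assoc, hS2, hInvSig]
  set A : Matrix (Fin n) (Fin n) ℝ := t • S with hAdef
  have hAsym : Aᵀ = A := by rw [hAdef, Matrix.transpose_smul, hSsym]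
  have hAA : A * A = lam • Sig⁻¹ := by
    rw [hAdef, smul_mul_assoc, mul_smul_comm, smul_smul, ht2, hS2]
  have hASA : A * (Sig * A) = lam • (1 : Matrix (Fin n) (Fin n) ℝ) := by
    rw [hAdef, mul_smul_comm, smul_mul_assoc, mul_smul_comm, smul_smul, ht2,
      ← mul_assoc, hSSigS]
  -- abbreviations
  set Y : Ω → Fin n → ℝ := fun ω => X ω - μ with hYdef
  set Q : Ω → ℝ := fun ω => Y ω ⬝ᵥ (Sig⁻¹ *ᵥ Y ω) with hQdef
  set v : Ω → Fin n → ℝ := fun ω => A *ᵥ Y ω with hvdef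
  have hQ0 : ∀ ω, 0 ≤ Q ω := by
    intro ω
    have := hps.dotProduct_mulVec_nonneg (Y ω)
    simpa using this
  have hvv : ∀ ω, v ω ⬝ᵥ v ω = lam * Q ω := by
    intro ω
    calc v ω ⬝ᵥ v ω = Y ω ⬝ᵥ (Aᵀ *ᵥ (A *ᵥ Y ω)) := dot_aux A (Y ω) _
    _ = Y ω ⬝ᵥ ((A * A) *ᵥ Y ω) := by rw [Matrix.mulVec_mulVec, hAsym]
    _ = Y ω ⬝ᵥ ((lam • Sig⁻¹) *ᵥ Y ω) := by rw [hAA]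
    _ = lam * Q ω := by
      rw [Matrix.smul_mulVec, dotProduct_smul, smul_eq_mul, hQdef]
  have hlSl : ∀ u : Fin n → ℝ, (A *ᵥ u) ⬝ᵥ (Sig *ᵥ (A *ᵥ u)) = lam * (u ⬝ᵥ u) := by
    intro u
    calc (A *ᵥ u) ⬝ᵥ (Sig *ᵥ (A *ᵥ u)) = u ⬝ᵥ (Aᵀ *ᵥ (Sig *ᵥ (A *ᵥ u))) :=
      dot_aux A u _
    _ = u ⬝ᵥ ((A * (Sig * A)) *ᵥ u) := by
      rw [Matrix.mulVec_mulVec, Matrix.mulVec_mulVec, hAsym, mul_assoc]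
    _ = u ⬝ᵥ ((lam • (1 : Matrix (Fin n) (Fin n) ℝ)) *ᵥ u) := by rw [hASA]
    _ = lam * (u ⬝ᵥ u) := by
      rw [Matrix.smul_mulVec, Matrix.one_mulVec, dotProduct_smul, smul_eq_mul]
  have hldot : ∀ (u : Fin n → ℝ) (ω : Ω), (A *ᵥ u) ⬝ᵥ Y ω = ∑ i, v ω i * u i := by
    intro u ω
    rw [dot_aux A u (Y ω), hAsym]
    simp [hvdef, dotProduct, mul_comm]
  -- measurability
  have hYm : ∀ i, Measurable fun ω => Y ω i := by
    intro i
    exact ((measurable_pi_apply i).comp hX).sub measurable_const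
  have hvm : ∀ i, Measurable fun ω => v ω i := by
    intro i
    have h : (fun ω => v ω i) = fun ω => ∑ j, A i j * Y ω j := by
      funext ω; simp [hvdef, Matrix.mulVec, dotProduct]
    rw [h]
    exact Finset.measurable_sum _ fun j _ => (hYm j).const_mul _
  have hQm : Measurable Q := by
    have h : Q = fun ω => ∑ i, Y ω i * ∑ j, Sig⁻¹ i j * Y ω j := by
      funext ω; simp [hQdef, dotProduct, Matrix.mulVec]
    rw [h]
    exact Finset.measurable_sum _ fun i _ =>
      (hYm i).mul (Finset.measurable_sum _ fun j _ => (hYm j).const_mul _)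
  -- mixture function
  set F : Ω → (Fin n → ℝ) → ℝ :=
    fun ω u => ∏ i, (Real.exp (v ω i * u i) * gphi (u i)) with hFdef
  have hFnn : ∀ ω u, 0 ≤ F ω u := fun ω u =>
    Finset.prod_nonneg fun i _ => mul_nonneg (Real.exp_nonneg _) (gphi_pos _).le
  have hFint : ∀ ω, Integrable (F ω) := by
    intro ω
    exact MeasureTheory.Integrable.fin_nat_prod
      (f := fun i x => Real.exp (v ω i * x) * gphi x) (fun i => gauss_lin_int _)
  have hmix : ∀ ω, ∫ u : Fin n → ℝ, F ω u = Real.exp (lam * Q ω / 2) := by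
    intro ω
    rw [hFdef]
    erw [MeasureTheory.integral_fin_nat_prod_eq_prod
      (f := fun i x => Real.exp (v ω i * x) * gphi x)]
    have h1 : ∀ i ∈ Finset.univ, (∫ x : ℝ, Real.exp (v ω i * x) * gphi x)
        = Real.exp ((v ω i)^2/2) := fun i _ => gauss_lin _
    rw [Finset.prod_congr rfl h1, ← Real.exp_sum]
    congr 1
    simp_rw [pow_two]
    rw [← Finset.sum_div]
    rw [← hvv ω]
    simp [dotProduct]
  -- Markov
  set ε : ENNReal := ENNReal.ofReal (Real.exp (lam * τ^2 / 2)) with hεdef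
  have hε0 : ε ≠ 0 := by
    simp [hεdef, Real.exp_pos]
  have hεtop : ε ≠ ⊤ := ENNReal.ofReal_ne_top
  have hfmeas : Measurable fun ω => ENNReal.ofReal (Real.exp (lam * Q ω / 2)) :=
    ENNReal.measurable_ofReal.comp (Real.measurable_exp.comp ((hQm.const_mul lam).div_const 2))
  have hsub : {ω | τ ≤ Real.sqrt ((X ω - μ) ⬝ᵥ (Sig⁻¹ *ᵥ (X ω - μ)))}
      ⊆ {ω | ε ≤ ENNReal.ofReal (Real.exp (lam * Q ω / 2))} := by
    intro ω hω
    have h1 : τ ≤ Real.sqrt (Q ω) := hω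
    have hQτ : τ^2 ≤ Q ω := by
      have h2 := pow_le_pow_left₀ hτpos.le h1 2
      rwa [Real.sq_sqrt (hQ0 ω)] at h2
    have : lam * τ^2 / 2 ≤ lam * Q ω / 2 := by
      gcongr
    exact ENNReal.ofReal_le_ofReal (Real.exp_le_exp.2 this)
  have hmarkov : P {ω | τ ≤ Real.sqrt ((X ω - μ) ⬝ᵥ (Sig⁻¹ *ᵥ (X ω - μ)))}
      ≤ (∫⁻ ω, ENNReal.ofReal (Real.exp (lam * Q ω / 2)) ∂P) / ε := by
    refine le_trans (measure_mono hsub) ?_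
    exact MeasureTheory.meas_ge_le_lintegral_div hfmeas.aemeasurable hε0 hεtop
  -- Tonelli swap
  have hFm : Measurable (fun p : Ω × (Fin n → ℝ) => ENNReal.ofReal (F p.1 p.2)) := by
    apply ENNReal.measurable_ofReal.comp
    simp only [hFdef]
    apply Finset.measurable_prod
    intro i _
    exact ((((hvm i).comp measurable_fst).mul
      ((measurable_pi_apply i).comp measurable_snd)).exp).mul
      (gphi_measurable.comp ((measurable_pi_apply i).comp measurable_snd))
  have hswap : ∫⁻ ω, ENNReal.ofReal (Real.exp (lam * Q ω / 2)) ∂P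
      = ∫⁻ u : Fin n → ℝ, ∫⁻ ω, ENNReal.ofReal (F ω u) ∂P := by
    have h1 : ∀ ω, ENNReal.ofReal (Real.exp (lam * Q ω / 2))
        = ∫⁻ u : Fin n → ℝ, ENNReal.ofReal (F ω u) := by
      intro ω
      rw [← hmix ω]
      exact MeasureTheory.ofReal_integral_eq_lintegral_ofReal (hFint ω)
        (ae_of_all _ (hFnn ω))
    simp_rw [h1]
    exact lintegral_lintegral_swap hFm.aemeasurable
  -- inner bound
  have hinner : ∀ u : Fin n → ℝ, (∫⁻ ω, ENNReal.ofReal (F ω u) ∂P)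
      ≤ ENNReal.ofReal (∏ i, (Real.exp (lam * (u i)^2 / 2) * gphi (u i))) := by
    intro u
    have hsplit : ∀ ω, F ω u = (∏ i, gphi (u i)) * Real.exp ((A *ᵥ u) ⬝ᵥ Y ω) := by
      intro ω
      simp only [hFdef]
      rw [Finset.prod_mul_distrib, ← Real.exp_sum, mul_comm]
      congr 1
      rw [hldot u ω]
    have hgnn : (0:ℝ) ≤ ∏ i, gphi (u i) := Finset.prod_nonneg fun i _ => (gphi_pos _).le
    calc (∫⁻ ω, ENNReal.ofReal (F ω u) ∂P)
        = ∫⁻ ω, ENNReal.ofReal (∏ i, gphi (u i))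
            * ENNReal.ofReal (Real.exp ((A *ᵥ u) ⬝ᵥ Y ω)) ∂P := by
          congr 1
          funext ω
          rw [hsplit ω, ENNReal.ofReal_mul hgnn]
    _ = ENNReal.ofReal (∏ i, gphi (u i))
          * ∫⁻ ω, ENNReal.ofReal (Real.exp ((A *ᵥ u) ⬝ᵥ Y ω)) ∂P :=
        lintegral_const_mul' _ _ ENNReal.ofReal_ne_top
    _ ≤ ENNReal.ofReal (∏ i, gphi (u i))
          * ENNReal.ofReal (Real.exp ((A *ᵥ u) ⬝ᵥ (Sig *ᵥ (A *ᵥ u)) / 2)) := by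
        refine mul_le_mul_right ?_ _
        have hI := (hsg (A *ᵥ u)).1
        have hB := (hsg (A *ᵥ u)).2
        have heq : ∫⁻ ω, ENNReal.ofReal (Real.exp ((A *ᵥ u) ⬝ᵥ Y ω)) ∂P
            = ENNReal.ofReal (∫ ω, Real.exp ((A *ᵥ u) ⬝ᵥ (X ω - μ)) ∂P) :=
          (MeasureTheory.ofReal_integral_eq_lintegral_ofReal hI
            (ae_of_all _ fun ω => (Real.exp_nonneg _))).symm
        rw [heq]
        exact ENNReal.ofReal_le_ofReal hB
    _ = ENNReal.ofReal (∏ i, (Real.exp (lam * (u i)^2 / 2) * gphi (u i))) := by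
        rw [← ENNReal.ofReal_mul hgnn]
        congr 1
        rw [hlSl u, Finset.prod_mul_distrib, ← Real.exp_sum, mul_comm]
        congr 1
        rw [dotProduct, Finset.mul_sum, Finset.sum_div]
        congr 1
        exact Finset.sum_congr rfl fun i _ => by ring
  -- outer integral
  have houter : (∫⁻ u : Fin n → ℝ, ENNReal.ofReal
        (∏ i, (Real.exp (lam * (u i)^2 / 2) * gphi (u i))))
      = ENNReal.ofReal ((Real.sqrt (1 - lam))⁻¹ ^ n) := by
    rw [← MeasureTheory.ofReal_integral_eq_lintegral_ofReal (μ := volume)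
      (MeasureTheory.Integrable.fin_nat_prod
        (f := fun i x => Real.exp (lam * x^2 / 2) * gphi x) (fun i => gauss_sq_int hlam_lt))
      (ae_of_all _ fun u => Finset.prod_nonneg fun i _ =>
        mul_nonneg (Real.exp_nonneg _) (gphi_pos _).le)]
    congr 1
    erw [MeasureTheory.integral_fin_nat_prod_eq_prod
      (f := fun i x => Real.exp (lam * x^2 / 2) * gphi x)]
    simp [gauss_sq hlam_lt]
  -- combine
  refine le_trans hmarkov ?_
  rw [hswap]
  have hstep : (∫⁻ u : Fin n → ℝ, ∫⁻ ω, ENNReal.ofReal (F ω u) ∂P) / ε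
      ≤ ENNReal.ofReal ((Real.sqrt (1 - lam))⁻¹ ^ n) / ε := by
    rw [← houter]
    exact ENNReal.div_le_div_right (lintegral_mono hinner) ε
  refine le_trans hstep ?_
  rw [hεdef, ← ENNReal.ofReal_div_of_pos (Real.exp_pos _)]
  apply ENNReal.ofReal_le_ofReal
  apply le_of_eq
  -- real arithmetic
  have hsn : Real.sqrt ((n:ℝ)/τ^2) = Real.sqrt n / τ := by
    rw [Real.sqrt_div hnpos.le, Real.sqrt_sq hτpos.le]
  have hrn : (Real.sqrt n) ^ n = (n:ℝ) ^ ((n:ℝ)/2) := by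
    rw [Real.sqrt_eq_rpow, ← Real.rpow_natCast ((n:ℝ) ^ (1/(2:ℝ))) n,
      ← Real.rpow_mul hnpos.le]
    congr 1
    ring
  have hlamτ : lam * τ^2 / 2 = τ^2/2 - (n:ℝ)/2 := by
    rw [hlamdef]
    field_simp
  have hrnpos : (0:ℝ) < (n:ℝ) ^ ((n:ℝ)/2) := Real.rpow_pos_of_pos hnpos _
  rw [h1lam, hsn, inv_div, div_pow, hrn, hlamτ, Real.exp_sub,
    Real.div_rpow (Real.exp_pos 1).le hnpos.le, Real.exp_one_rpow,
    show -τ^2/2 = -(τ^2/2) by ring, Real.exp_neg]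
  have he1 : Real.exp (τ^2/2) ≠ 0 := Real.exp_ne_zero _
  have he2 : Real.exp ((n:ℝ)/2) ≠ 0 := Real.exp_ne_zero _
  field_simp
  try ring
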